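/- arXiv:2005.10076 — 2 statements merged into one kernel-verified Lean document; each statement's English description precedes it below -/
import Mathlib

section
/- Let $\widehat\Omega \subset \mathbb{R}^d$ be measurable, $\rho \geq 0$ and $g$ measurable radial kernel profiles with $g(|\cdot|) \in L^1(\mathbb{R}^d)$, $G(x) = \int_{\widehat\Omega} g(|y-x|)\,dy$. Suppose the form $a_\rho(u,u) = \int_{\widehat\Omega}\int_{\widehat\Omega}\rho(|y-x|)(u(y)-u(x))^2\,dy\,dx$ satisfies $\|u\|_{L^2(\Omega)}^2 \leq \kappa\, a_\rho(u,u)$ for all $u$ in a subspace $V$ vanishing on $\Omega_I$. If $|\lambda| < \left[2\kappa(\|g(|\cdot|)\|_{L^1(\mathbb{R}^d)} + \|G\|_{L^\infty(\widehat\Omega)})\right]^{-1}$, then for all $u \in V$, $a_\rho(u,u) + \lambda\, a_g(u,u) \geq \left(1 - 2|\lambda|\kappa(\|g(|\cdot|)\|_{L^1} + \|G\|_{L^\infty})\right)a_\rho(u,u) \geq 0$, where $a_g(u,u) = \int_{\widehat\Omega}\int_{\widehat\Omega} g(|y-x|)(u(y)-u(x))^2\,dy\,dx$. -/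
open MeasureTheory

private lemma conv_right {d : ℕ} (Ωhat : Set (EuclideanSpace ℝ (Fin d)))
    {q : ℝ → ℝ} (hq : Integrable (fun ξ : EuclideanSpace ℝ (Fin d) => q ‖ξ‖))
    {f : EuclideanSpace ℝ (Fin d) → ℝ} (hf : Integrable f (volume.restrict Ωhat)) :
    Integrable (fun p : EuclideanSpace ℝ (Fin d) × EuclideanSpace ℝ (Fin d) =>
      f p.2 * q ‖p.2 - p.1‖) ((volume.restrict Ωhat).prod (volume.restrict Ωhat)) := by
  have h := hf.convolution_integrand (ContinuousLinearMap.mul ℝ ℝ) hq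
  simp_rw [ContinuousLinearMap.mul_apply'] at h
  have h2 : Integrable (fun p : EuclideanSpace ℝ (Fin d) × EuclideanSpace ℝ (Fin d) =>
      f p.2 * q ‖p.2 - p.1‖) (volume.prod (volume.restrict Ωhat)) := by
    have e : (fun p : EuclideanSpace ℝ (Fin d) × EuclideanSpace ℝ (Fin d) =>
        f p.2 * q ‖p.2 - p.1‖)
        = fun p : EuclideanSpace ℝ (Fin d) × EuclideanSpace ℝ (Fin d) =>
          f p.2 * q ‖p.1 - p.2‖ := by
      funext p; rw [norm_sub_rev]
    rw [e]; exact h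
  have h3 := h2.restrict (s := Ωhat ×ˢ Set.univ)
  rwa [← Measure.prod_restrict, Measure.restrict_univ] at h3

private lemma conv_left {d : ℕ} (Ωhat : Set (EuclideanSpace ℝ (Fin d)))
    {q : ℝ → ℝ} (hq : Integrable (fun ξ : EuclideanSpace ℝ (Fin d) => q ‖ξ‖))
    {f : EuclideanSpace ℝ (Fin d) → ℝ} (hf : Integrable f (volume.restrict Ωhat)) :
    Integrable (fun p : EuclideanSpace ℝ (Fin d) × EuclideanSpace ℝ (Fin d) =>
      f p.1 * q ‖p.2 - p.1‖) ((volume.restrict Ωhat).prod (volume.restrict Ωhat)) := by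
  have h := (conv_right Ωhat hq hf).swap
  have e : ((fun p : EuclideanSpace ℝ (Fin d) × EuclideanSpace ℝ (Fin d) =>
      f p.2 * q ‖p.2 - p.1‖) ∘ Prod.swap)
      = fun p : EuclideanSpace ℝ (Fin d) × EuclideanSpace ℝ (Fin d) =>
        f p.1 * q ‖p.1 - p.2‖ := rfl
  rw [e] at h
  have e2 : (fun p : EuclideanSpace ℝ (Fin d) × EuclideanSpace ℝ (Fin d) =>
      f p.1 * q ‖p.1 - p.2‖)
      = fun p : EuclideanSpace ℝ (Fin d) × EuclideanSpace ℝ (Fin d) =>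
        f p.1 * q ‖p.2 - p.1‖ := by
    funext p; rw [norm_sub_rev]
  rwa [e2] at h

private lemma ag_abs_bound {d : ℕ} {Ωhat : Set (EuclideanSpace ℝ (Fin d))}
    (hΩhat : MeasurableSet Ωhat) {g : ℝ → ℝ} (hgmeas : Measurable g)
    (hgL1 : Integrable (fun ξ : EuclideanSpace ℝ (Fin d) => g ‖ξ‖))
    {Ginf : ℝ}
    (hGinf : ∀ x ∈ Ωhat, |∫ y in Ωhat, g ‖y - x‖| ≤ Ginf)
    {u : EuclideanSpace ℝ (Fin d) → ℝ} (hL2 : MemLp u 2 (volume.restrict Ωhat))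
    (hgint : IntegrableOn (fun p : EuclideanSpace ℝ (Fin d) × EuclideanSpace ℝ (Fin d) =>
        g ‖p.2 - p.1‖ * (u p.2 - u p.1) ^ 2) (Ωhat ×ˢ Ωhat)) :
    |∫ x in Ωhat, ∫ y in Ωhat, g ‖y - x‖ * (u y - u x) ^ 2|
      ≤ 2 * ((∫ ξ : EuclideanSpace ℝ (Fin d), |g ‖ξ‖|) + Ginf) * ∫ x in Ωhat, u x ^ 2 := by
  set C : ℝ := ∫ ξ : EuclideanSpace ℝ (Fin d), |g ‖ξ‖| with hCdef
  have usq : Integrable (fun x => u x ^ 2) (volume.restrict Ωhat) := hL2.integrable_sq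
  have habs : Integrable (fun ξ : EuclideanSpace ℝ (Fin d) => |g ‖ξ‖|) volume := hgL1.abs
  -- integrability of the pieces
  have I1 : Integrable (fun p : EuclideanSpace ℝ (Fin d) × EuclideanSpace ℝ (Fin d) =>
      u p.2 ^ 2 * g ‖p.2 - p.1‖) ((volume.restrict Ωhat).prod (volume.restrict Ωhat)) := conv_right Ωhat hgL1 usq
  have I2 : Integrable (fun p : EuclideanSpace ℝ (Fin d) × EuclideanSpace ℝ (Fin d) =>
      u p.1 ^ 2 * g ‖p.2 - p.1‖) ((volume.restrict Ωhat).prod (volume.restrict Ωhat)) := conv_left Ωhat hgL1 usq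
  have J1 : Integrable (fun p : EuclideanSpace ℝ (Fin d) × EuclideanSpace ℝ (Fin d) =>
      u p.2 ^ 2 * |g ‖p.2 - p.1‖|) ((volume.restrict Ωhat).prod (volume.restrict Ωhat)) :=
    conv_right Ωhat (q := fun r => |g r|) habs usq
  have J2 : Integrable (fun p : EuclideanSpace ℝ (Fin d) × EuclideanSpace ℝ (Fin d) =>
      u p.1 ^ 2 * |g ‖p.2 - p.1‖|) ((volume.restrict Ωhat).prod (volume.restrict Ωhat)) :=
    conv_left Ωhat (q := fun r => |g r|) habs usq
  have hbound_int : Integrable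
      (fun p : EuclideanSpace ℝ (Fin d) × EuclideanSpace ℝ (Fin d) =>
        (u p.1 ^ 2 + u p.2 ^ 2) / 2 * |g ‖p.2 - p.1‖|) ((volume.restrict Ωhat).prod (volume.restrict Ωhat)) := by
    have e : (fun p : EuclideanSpace ℝ (Fin d) × EuclideanSpace ℝ (Fin d) =>
        (u p.1 ^ 2 + u p.2 ^ 2) / 2 * |g ‖p.2 - p.1‖|)
        = fun p : EuclideanSpace ℝ (Fin d) × EuclideanSpace ℝ (Fin d) =>
          (1 / 2) * (u p.1 ^ 2 * |g ‖p.2 - p.1‖|)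
            + (1 / 2) * (u p.2 ^ 2 * |g ‖p.2 - p.1‖|) := by
      funext p; ring
    rw [e]; exact (J2.const_mul _).add (J1.const_mul _)
  have hpt : ∀ p : EuclideanSpace ℝ (Fin d) × EuclideanSpace ℝ (Fin d),
      ‖u p.1 * u p.2 * g ‖p.2 - p.1‖‖
        ≤ (u p.1 ^ 2 + u p.2 ^ 2) / 2 * |g ‖p.2 - p.1‖| := by
    intro p
    rw [Real.norm_eq_abs, abs_mul]
    refine mul_le_mul_of_nonneg_right ?_ (abs_nonneg _)
    nlinarith [abs_mul (u p.1) (u p.2), sq_abs (u p.1), sq_abs (u p.2),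
      two_mul_le_add_sq |u p.1| |u p.2|, abs_nonneg (u p.1 * u p.2)]
  have I3 : Integrable (fun p : EuclideanSpace ℝ (Fin d) × EuclideanSpace ℝ (Fin d) =>
      u p.1 * u p.2 * g ‖p.2 - p.1‖) ((volume.restrict Ωhat).prod (volume.restrict Ωhat)) := by
    have hu := hL2.aestronglyMeasurable
    have asm : AEStronglyMeasurable
        (fun p : EuclideanSpace ℝ (Fin d) × EuclideanSpace ℝ (Fin d) =>
          u p.1 * u p.2 * g ‖p.2 - p.1‖) ((volume.restrict Ωhat).prod (volume.restrict Ωhat)) :=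
      (hu.comp_fst.mul hu.comp_snd).mul
        ((hgmeas.comp ((measurable_snd.sub measurable_fst).norm)).aestronglyMeasurable)
    exact Integrable.mono' hbound_int asm (Filter.Eventually.of_forall hpt)
  -- the full integrand, as an integral w.r.t. the product measure
  have hgπ : Integrable (fun p : EuclideanSpace ℝ (Fin d) × EuclideanSpace ℝ (Fin d) =>
      g ‖p.2 - p.1‖ * (u p.2 - u p.1) ^ 2) ((volume.restrict Ωhat).prod (volume.restrict Ωhat)) := by
    have h := hgint
    rw [IntegrableOn, Measure.volume_eq_prod, ← Measure.prod_restrict] at h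
    exact h
  -- pointwise facts about the averaged kernel
  have hA_nonneg : ∀ y : EuclideanSpace ℝ (Fin d), 0 ≤ ∫ x in Ωhat, |g ‖y - x‖| :=
    fun y => setIntegral_nonneg hΩhat fun x _ => abs_nonneg _
  have hA'_nonneg : ∀ x : EuclideanSpace ℝ (Fin d), 0 ≤ ∫ y in Ωhat, |g ‖y - x‖| :=
    fun x => setIntegral_nonneg hΩhat fun y _ => abs_nonneg _
  have hA_le : ∀ y : EuclideanSpace ℝ (Fin d), (∫ x in Ωhat, |g ‖y - x‖|) ≤ C := by
    intro y
    have hint : Integrable (fun x : EuclideanSpace ℝ (Fin d) => |g ‖y - x‖|) volume :=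
      habs.comp_sub_left y
    calc (∫ x in Ωhat, |g ‖y - x‖|) ≤ ∫ x : EuclideanSpace ℝ (Fin d), |g ‖y - x‖| :=
          setIntegral_le_integral hint (Filter.Eventually.of_forall fun x => abs_nonneg _)
      _ = C := integral_sub_left_eq_self (fun ξ : EuclideanSpace ℝ (Fin d) => |g ‖ξ‖|) volume y
  have hA'_le : ∀ x : EuclideanSpace ℝ (Fin d), (∫ y in Ωhat, |g ‖y - x‖|) ≤ C := by
    intro x
    have hint : Integrable (fun y : EuclideanSpace ℝ (Fin d) => |g ‖y - x‖|) volume :=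
      habs.comp_sub_right x
    calc (∫ y in Ωhat, |g ‖y - x‖|) ≤ ∫ y : EuclideanSpace ℝ (Fin d), |g ‖y - x‖| :=
          setIntegral_le_integral hint (Filter.Eventually.of_forall fun y => abs_nonneg _)
      _ = C := integral_sub_right_eq_self (fun ξ : EuclideanSpace ℝ (Fin d) => |g ‖ξ‖|) x
  -- bound for the first piece
  have b1 : |∫ p : EuclideanSpace ℝ (Fin d) × EuclideanSpace ℝ (Fin d),
      u p.2 ^ 2 * g ‖p.2 - p.1‖ ∂((volume.restrict Ωhat).prod (volume.restrict Ωhat))| ≤ Ginf * ∫ x in Ωhat, u x ^ 2 := by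
    have e0 : (∫ p : EuclideanSpace ℝ (Fin d) × EuclideanSpace ℝ (Fin d),
        u p.2 ^ 2 * g ‖p.2 - p.1‖ ∂((volume.restrict Ωhat).prod (volume.restrict Ωhat)))
        = ∫ y in Ωhat, ∫ x in Ωhat, u y ^ 2 * g ‖y - x‖ := integral_prod_symm _ I1
    have e1 : (∫ y in Ωhat, ∫ x in Ωhat, u y ^ 2 * g ‖y - x‖)
        = ∫ y in Ωhat, u y ^ 2 * ∫ x in Ωhat, g ‖y - x‖ :=
      integral_congr_ae (Filter.Eventually.of_forall fun y => integral_const_mul _ _)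
    rw [e0, e1, ← Real.norm_eq_abs]
    calc ‖∫ y in Ωhat, u y ^ 2 * ∫ x in Ωhat, g ‖y - x‖‖
        ≤ ∫ y in Ωhat, Ginf * u y ^ 2 := by
          refine norm_integral_le_of_norm_le (usq.const_mul Ginf) ?_
          filter_upwards [ae_restrict_mem hΩhat] with y hy
          rw [Real.norm_eq_abs, abs_mul, abs_of_nonneg (sq_nonneg (u y)), mul_comm]
          refine mul_le_mul_of_nonneg_right ?_ (sq_nonneg _)
          have e2 : (∫ x in Ωhat, g ‖y - x‖) = ∫ x in Ωhat, g ‖x - y‖ := by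
            simp only [norm_sub_rev y]
          rw [e2]
          exact hGinf y hy
      _ = Ginf * ∫ x in Ωhat, u x ^ 2 := integral_const_mul _ _
  -- bound for the second piece
  have b2 : |∫ p : EuclideanSpace ℝ (Fin d) × EuclideanSpace ℝ (Fin d),
      u p.1 ^ 2 * g ‖p.2 - p.1‖ ∂((volume.restrict Ωhat).prod (volume.restrict Ωhat))| ≤ Ginf * ∫ x in Ωhat, u x ^ 2 := by
    have e0 : (∫ p : EuclideanSpace ℝ (Fin d) × EuclideanSpace ℝ (Fin d),
        u p.1 ^ 2 * g ‖p.2 - p.1‖ ∂((volume.restrict Ωhat).prod (volume.restrict Ωhat)))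
        = ∫ x in Ωhat, ∫ y in Ωhat, u x ^ 2 * g ‖y - x‖ := integral_prod _ I2
    have e1 : (∫ x in Ωhat, ∫ y in Ωhat, u x ^ 2 * g ‖y - x‖)
        = ∫ x in Ωhat, u x ^ 2 * ∫ y in Ωhat, g ‖y - x‖ :=
      integral_congr_ae (Filter.Eventually.of_forall fun x => integral_const_mul _ _)
    rw [e0, e1, ← Real.norm_eq_abs]
    calc ‖∫ x in Ωhat, u x ^ 2 * ∫ y in Ωhat, g ‖y - x‖‖
        ≤ ∫ x in Ωhat, Ginf * u x ^ 2 := by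
          refine norm_integral_le_of_norm_le (usq.const_mul Ginf) ?_
          filter_upwards [ae_restrict_mem hΩhat] with x hx
          rw [Real.norm_eq_abs, abs_mul, abs_of_nonneg (sq_nonneg (u x)), mul_comm]
          exact mul_le_mul_of_nonneg_right (hGinf x hx) (sq_nonneg _)
      _ = Ginf * ∫ x in Ωhat, u x ^ 2 := integral_const_mul _ _
  -- bounds for the absolute-kernel pieces
  have bJ1 : (∫ p : EuclideanSpace ℝ (Fin d) × EuclideanSpace ℝ (Fin d),
      u p.2 ^ 2 * |g ‖p.2 - p.1‖| ∂((volume.restrict Ωhat).prod (volume.restrict Ωhat))) ≤ C * ∫ x in Ωhat, u x ^ 2 := by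
    have e0 : (∫ p : EuclideanSpace ℝ (Fin d) × EuclideanSpace ℝ (Fin d),
        u p.2 ^ 2 * |g ‖p.2 - p.1‖| ∂((volume.restrict Ωhat).prod (volume.restrict Ωhat)))
        = ∫ y in Ωhat, ∫ x in Ωhat, u y ^ 2 * |g ‖y - x‖| := integral_prod_symm _ J1
    have e1 : (∫ y in Ωhat, ∫ x in Ωhat, u y ^ 2 * |g ‖y - x‖|)
        = ∫ y in Ωhat, u y ^ 2 * ∫ x in Ωhat, |g ‖y - x‖| :=
      integral_congr_ae (Filter.Eventually.of_forall fun y => integral_const_mul _ _)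
    rw [e0, e1]
    calc (∫ y in Ωhat, u y ^ 2 * ∫ x in Ωhat, |g ‖y - x‖|)
        ≤ ∫ y in Ωhat, u y ^ 2 * C :=
          integral_mono_of_nonneg
            (Filter.Eventually.of_forall fun y => mul_nonneg (sq_nonneg _) (hA_nonneg y))
            (usq.mul_const C)
            (Filter.Eventually.of_forall fun y =>
              mul_le_mul_of_nonneg_left (hA_le y) (sq_nonneg _))
      _ = C * ∫ x in Ωhat, u x ^ 2 := by
          rw [← integral_const_mul]
          exact integral_congr_ae (Filter.Eventually.of_forall fun y => by ring)
  have bJ2 : (∫ p : EuclideanSpace ℝ (Fin d) × EuclideanSpace ℝ (Fin d),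
      u p.1 ^ 2 * |g ‖p.2 - p.1‖| ∂((volume.restrict Ωhat).prod (volume.restrict Ωhat))) ≤ C * ∫ x in Ωhat, u x ^ 2 := by
    have e0 : (∫ p : EuclideanSpace ℝ (Fin d) × EuclideanSpace ℝ (Fin d),
        u p.1 ^ 2 * |g ‖p.2 - p.1‖| ∂((volume.restrict Ωhat).prod (volume.restrict Ωhat)))
        = ∫ x in Ωhat, ∫ y in Ωhat, u x ^ 2 * |g ‖y - x‖| := integral_prod _ J2
    have e1 : (∫ x in Ωhat, ∫ y in Ωhat, u x ^ 2 * |g ‖y - x‖|)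
        = ∫ x in Ωhat, u x ^ 2 * ∫ y in Ωhat, |g ‖y - x‖| :=
      integral_congr_ae (Filter.Eventually.of_forall fun x => integral_const_mul _ _)
    rw [e0, e1]
    calc (∫ x in Ωhat, u x ^ 2 * ∫ y in Ωhat, |g ‖y - x‖|)
        ≤ ∫ x in Ωhat, u x ^ 2 * C :=
          integral_mono_of_nonneg
            (Filter.Eventually.of_forall fun x => mul_nonneg (sq_nonneg _) (hA'_nonneg x))
            (usq.mul_const C)
            (Filter.Eventually.of_forall fun x =>
              mul_le_mul_of_nonneg_left (hA'_le x) (sq_nonneg _))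
      _ = C * ∫ x in Ωhat, u x ^ 2 := by
          rw [← integral_const_mul]
          exact integral_congr_ae (Filter.Eventually.of_forall fun x => by ring)
  -- bound for the cross term
  have b3 : |∫ p : EuclideanSpace ℝ (Fin d) × EuclideanSpace ℝ (Fin d),
      u p.1 * u p.2 * g ‖p.2 - p.1‖ ∂((volume.restrict Ωhat).prod (volume.restrict Ωhat))| ≤ C * ∫ x in Ωhat, u x ^ 2 := by
    rw [← Real.norm_eq_abs]
    calc ‖∫ p : EuclideanSpace ℝ (Fin d) × EuclideanSpace ℝ (Fin d),
        u p.1 * u p.2 * g ‖p.2 - p.1‖ ∂((volume.restrict Ωhat).prod (volume.restrict Ωhat))‖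
        ≤ ∫ p : EuclideanSpace ℝ (Fin d) × EuclideanSpace ℝ (Fin d),
            (u p.1 ^ 2 + u p.2 ^ 2) / 2 * |g ‖p.2 - p.1‖| ∂((volume.restrict Ωhat).prod (volume.restrict Ωhat)) :=
          norm_integral_le_of_norm_le hbound_int (Filter.Eventually.of_forall hpt)
      _ = (1 / 2) * (∫ p : EuclideanSpace ℝ (Fin d) × EuclideanSpace ℝ (Fin d),
            u p.1 ^ 2 * |g ‖p.2 - p.1‖| ∂((volume.restrict Ωhat).prod (volume.restrict Ωhat)))
          + (1 / 2) * (∫ p : EuclideanSpace ℝ (Fin d) × EuclideanSpace ℝ (Fin d),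
            u p.2 ^ 2 * |g ‖p.2 - p.1‖| ∂((volume.restrict Ωhat).prod (volume.restrict Ωhat))) := by
          rw [← integral_const_mul, ← integral_const_mul,
            ← integral_add (J2.const_mul _) (J1.const_mul _)]
          exact integral_congr_ae (Filter.Eventually.of_forall fun p => by ring)
      _ ≤ C * ∫ x in Ωhat, u x ^ 2 := by linarith
  -- decompose the full integral
  have hdecomp : (∫ p : EuclideanSpace ℝ (Fin d) × EuclideanSpace ℝ (Fin d),
      g ‖p.2 - p.1‖ * (u p.2 - u p.1) ^ 2 ∂((volume.restrict Ωhat).prod (volume.restrict Ωhat)))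
      = (∫ p : EuclideanSpace ℝ (Fin d) × EuclideanSpace ℝ (Fin d),
          u p.2 ^ 2 * g ‖p.2 - p.1‖ ∂((volume.restrict Ωhat).prod (volume.restrict Ωhat)))
        + (∫ p : EuclideanSpace ℝ (Fin d) × EuclideanSpace ℝ (Fin d),
          u p.1 ^ 2 * g ‖p.2 - p.1‖ ∂((volume.restrict Ωhat).prod (volume.restrict Ωhat)))
        - 2 * ∫ p : EuclideanSpace ℝ (Fin d) × EuclideanSpace ℝ (Fin d),
          u p.1 * u p.2 * g ‖p.2 - p.1‖ ∂((volume.restrict Ωhat).prod (volume.restrict Ωhat)) := by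
    have e : (fun p : EuclideanSpace ℝ (Fin d) × EuclideanSpace ℝ (Fin d) =>
        g ‖p.2 - p.1‖ * (u p.2 - u p.1) ^ 2)
        = fun p : EuclideanSpace ℝ (Fin d) × EuclideanSpace ℝ (Fin d) =>
          (u p.2 ^ 2 * g ‖p.2 - p.1‖ + u p.1 ^ 2 * g ‖p.2 - p.1‖)
            - 2 * (u p.1 * u p.2 * g ‖p.2 - p.1‖) := by
      funext p; ring
    have hsum : Integrable (fun p : EuclideanSpace ℝ (Fin d) × EuclideanSpace ℝ (Fin d) =>
        u p.2 ^ 2 * g ‖p.2 - p.1‖ + u p.1 ^ 2 * g ‖p.2 - p.1‖)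
        ((volume.restrict Ωhat).prod (volume.restrict Ωhat)) := I1.add I2
    have h2' : Integrable (fun p : EuclideanSpace ℝ (Fin d) × EuclideanSpace ℝ (Fin d) =>
        2 * (u p.1 * u p.2 * g ‖p.2 - p.1‖))
        ((volume.restrict Ωhat).prod (volume.restrict Ωhat)) := I3.const_mul 2
    rw [e, integral_sub hsum h2', integral_add I1 I2, integral_const_mul]
  have hiter : (∫ x in Ωhat, ∫ y in Ωhat, g ‖y - x‖ * (u y - u x) ^ 2)
      = ∫ p : EuclideanSpace ℝ (Fin d) × EuclideanSpace ℝ (Fin d),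
        g ‖p.2 - p.1‖ * (u p.2 - u p.1) ^ 2 ∂((volume.restrict Ωhat).prod (volume.restrict Ωhat)) := (integral_prod _ hgπ).symm
  rw [hiter, hdecomp]
  set X := ∫ p : EuclideanSpace ℝ (Fin d) × EuclideanSpace ℝ (Fin d),
    u p.2 ^ 2 * g ‖p.2 - p.1‖ ∂((volume.restrict Ωhat).prod (volume.restrict Ωhat)) with hX
  set Y := ∫ p : EuclideanSpace ℝ (Fin d) × EuclideanSpace ℝ (Fin d),
    u p.1 ^ 2 * g ‖p.2 - p.1‖ ∂((volume.restrict Ωhat).prod (volume.restrict Ωhat)) with hY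
  set W := ∫ p : EuclideanSpace ℝ (Fin d) × EuclideanSpace ℝ (Fin d),
    u p.1 * u p.2 * g ‖p.2 - p.1‖ ∂((volume.restrict Ωhat).prod (volume.restrict Ωhat)) with hW
  rw [abs_le]
  constructor
  · nlinarith [neg_abs_le X, neg_abs_le Y, le_abs_self W, b1, b2, b3]
  · nlinarith [le_abs_self X, le_abs_self Y, neg_abs_le W, b1, b2, b3]

/-- Mengesha–Du coercivity estimate for sign-changing kernels
`K = 2ρ + 2lam g`: under the smallness condition on `|lam|`, the perturbed
nonlocal energy remains bounded below by a positive multiple of the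
unperturbed energy, hence nonnegative. -/
theorem sign_changing_coercivity
    {d : ℕ} (Ω Ωhat : Set (EuclideanSpace ℝ (Fin d)))
    (hsub : Ω ⊆ Ωhat) (hΩ : MeasurableSet Ω) (hΩhat : MeasurableSet Ωhat)
    (ρ g : ℝ → ℝ) (hρmeas : Measurable ρ) (hρ0 : ∀ r, 0 ≤ ρ r)
    (hgmeas : Measurable g)
    (hgL1 : Integrable (fun ξ : EuclideanSpace ℝ (Fin d) => g ‖ξ‖))
    (Ginf : ℝ) (hGinf0 : 0 ≤ Ginf)
    (hGinf : ∀ x ∈ Ωhat, |∫ y in Ωhat, g ‖y - x‖| ≤ Ginf)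
    (κ lam : ℝ) (hκ : 0 < κ)
    (hlam : |lam| < (2 * κ * ((∫ ξ : EuclideanSpace ℝ (Fin d), |g ‖ξ‖|) + Ginf))⁻¹)
    (V : Set (EuclideanSpace ℝ (Fin d) → ℝ))
    (hV : ∀ u ∈ V, (∀ x ∈ Ωhat \ Ω, u x = 0) ∧
      MemLp u 2 (volume.restrict Ωhat) ∧
      IntegrableOn (fun p : EuclideanSpace ℝ (Fin d) × EuclideanSpace ℝ (Fin d) =>
        ρ ‖p.2 - p.1‖ * (u p.2 - u p.1) ^ 2) (Ωhat ×ˢ Ωhat) ∧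
      IntegrableOn (fun p : EuclideanSpace ℝ (Fin d) × EuclideanSpace ℝ (Fin d) =>
        g ‖p.2 - p.1‖ * (u p.2 - u p.1) ^ 2) (Ωhat ×ˢ Ωhat) ∧
      (∫ x in Ω, (u x) ^ 2)
        ≤ κ * ∫ x in Ωhat, ∫ y in Ωhat, ρ ‖y - x‖ * (u y - u x) ^ 2) :
    ∀ u ∈ V,
      (1 - 2 * |lam| * κ * ((∫ ξ : EuclideanSpace ℝ (Fin d), |g ‖ξ‖|) + Ginf))
          * ∫ x in Ωhat, ∫ y in Ωhat, ρ ‖y - x‖ * (u y - u x) ^ 2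
        ≤ (∫ x in Ωhat, ∫ y in Ωhat, ρ ‖y - x‖ * (u y - u x) ^ 2)
          + lam * ∫ x in Ωhat, ∫ y in Ωhat, g ‖y - x‖ * (u y - u x) ^ 2 ∧
      0 ≤ (1 - 2 * |lam| * κ * ((∫ ξ : EuclideanSpace ℝ (Fin d), |g ‖ξ‖|) + Ginf))
          * ∫ x in Ωhat, ∫ y in Ωhat, ρ ‖y - x‖ * (u y - u x) ^ 2 := by
  intro u hu
  obtain ⟨hzero, hL2, hρint, hgint, hpoin⟩ := hV u hu
  set C : ℝ := ∫ ξ : EuclideanSpace ℝ (Fin d), |g ‖ξ‖| with hCdef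
  set Aρ : ℝ := ∫ x in Ωhat, ∫ y in Ωhat, ρ ‖y - x‖ * (u y - u x) ^ 2 with hAρ
  set Ag : ℝ := ∫ x in Ωhat, ∫ y in Ωhat, g ‖y - x‖ * (u y - u x) ^ 2 with hAg
  have hC0 : 0 ≤ C := integral_nonneg fun ξ => abs_nonneg _
  have hS0 : 0 ≤ C + Ginf := by linarith
  have hAρ0 : 0 ≤ Aρ :=
    setIntegral_nonneg hΩhat fun x _ =>
      setIntegral_nonneg hΩhat fun y _ => mul_nonneg (hρ0 _) (sq_nonneg _)
  -- ∫ over Ωhat of u² equals ∫ over Ω of u²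
  have husq_int : IntegrableOn (fun x => u x ^ 2) Ωhat volume := hL2.integrable_sq
  have husq_eq : (∫ x in Ωhat, u x ^ 2) = ∫ x in Ω, u x ^ 2 := by
    have hsplit : Ωhat = Ω ∪ Ωhat \ Ω := (Set.union_diff_cancel hsub).symm
    have h1 : (∫ x in Ω ∪ Ωhat \ Ω, u x ^ 2)
        = (∫ x in Ω, u x ^ 2) + ∫ x in Ωhat \ Ω, u x ^ 2 :=
      setIntegral_union Set.disjoint_sdiff_right (hΩhat.diff hΩ)
        (husq_int.mono_set hsub) (husq_int.mono_set Set.diff_subset)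
    rw [← hsplit] at h1
    have h0 : (∫ x in Ωhat \ Ω, u x ^ 2) = 0 :=
      setIntegral_eq_zero_of_forall_eq_zero fun x hx => by rw [hzero x hx]; simp
    rw [h1, h0, add_zero]
  have hu2κ : (∫ x in Ωhat, u x ^ 2) ≤ κ * Aρ := by rw [husq_eq]; exact hpoin
  have husq0 : 0 ≤ ∫ x in Ωhat, u x ^ 2 :=
    setIntegral_nonneg hΩhat fun x _ => sq_nonneg _
  have hAgb : |Ag| ≤ 2 * (C + Ginf) * ∫ x in Ωhat, u x ^ 2 :=
    ag_abs_bound hΩhat hgmeas hgL1 hGinf hL2 hgint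
  have hAg2 : |Ag| ≤ 2 * (C + Ginf) * (κ * Aρ) := by
    refine hAgb.trans ?_
    exact mul_le_mul_of_nonneg_left hu2κ (by linarith)
  have habsprod : -(|lam| * |Ag|) ≤ lam * Ag := by
    rw [← abs_mul]; exact neg_abs_le _
  have h2 : |lam| * |Ag| ≤ |lam| * (2 * (C + Ginf) * (κ * Aρ)) :=
    mul_le_mul_of_nonneg_left hAg2 (abs_nonneg lam)
  have hfac : 2 * |lam| * κ * (C + Ginf) ≤ 1 := by
    rcases eq_or_lt_of_le hS0 with h | h
    · rw [← h]; simp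
    · have hpos : 0 < 2 * κ * (C + Ginf) := by positivity
      have h3 : |lam| * (2 * κ * (C + Ginf)) < 1 := by
        calc |lam| * (2 * κ * (C + Ginf))
            < (2 * κ * (C + Ginf))⁻¹ * (2 * κ * (C + Ginf)) :=
              mul_lt_mul_of_pos_right hlam hpos
          _ = 1 := inv_mul_cancel₀ hpos.ne'
      nlinarith
  constructor
  · nlinarith [habsprod, h2, hAρ0]
  · exact mul_nonneg (by linarith) hAρ0
end

section
/- Let $\Omega = (0, |\Omega|) \subset \mathbb{R}$ and let $u \in L^2$ be defined on $\widehat\Omega = \Omega \cup \Omega_I$ with $u = 0$ on $\Omega_I$, where $\Omega_I$ is the $\delta$-collar of $\Omega$. Suppose $\rho \geq 0$ is a kernel with $\rho(|z|) \geq \rho_0 > 0$ for $|z| \leq \sigma$, for some $0 < \sigma \leq \delta$. Then there exists a constant $\kappa > 0$ depending only on $\rho_0$, $\sigma$, and $|\Omega|$ such that $\|u\|_{L^2(\Omega)}^2 \leq \kappa \int_{\widehat\Omega}\int_{\widehat\Omega} \rho(|y-x|)(u(y)-u(x))^2\,dy\,dx$. -/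
open MeasureTheory
open scoped ENNReal

private lemma setLIntegral_zero_of_zero {s : Set ℝ} (hs : MeasurableSet s) (f : ℝ → ℝ≥0∞)
    (hf : ∀ x ∈ s, f x = 0) : ∫⁻ x in s, f x = 0 := by
  have h : ∀ᵐ x ∂(volume.restrict s), f x = 0 :=
    (ae_restrict_iff' hs).2 (Filter.Eventually.of_forall hf)
  calc ∫⁻ x in s, f x = ∫⁻ _ in s, (0 : ℝ≥0∞) := lintegral_congr_ae h
    _ = 0 := lintegral_zero

private lemma lintegral_eq_setLIntegral {s : Set ℝ} (hs : MeasurableSet s) (f : ℝ → ℝ≥0∞)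
    (hf : ∀ x ∉ s, f x = 0) : ∫⁻ x in s, f x = ∫⁻ x, f x := by
  have h := lintegral_add_compl (μ := volume) f hs
  rw [setLIntegral_zero_of_zero hs.compl f (fun x hx => hf x hx), add_zero] at h
  exact h

private lemma chain_core (len σ : ℝ) (hlen : 0 < len) (hσ : 0 < σ)
    (v : ℝ → ℝ) (hv : Measurable v) (hv0 : ∀ x, x ∉ Set.Ioo 0 len → v x = 0) :
    ENNReal.ofReal (σ / 2) * ∫⁻ x, ENNReal.ofReal (v x ^ 2) ≤
      ((⌈2 * len / σ⌉₊ : ℝ≥0∞)) ^ 2 *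
        ∫⁻ z in Set.Ioc 0 σ, ∫⁻ x, ENNReal.ofReal ((v (x + z) - v x) ^ 2) := by
  set N := ⌈2 * len / σ⌉₊ with hNdef
  set M := ∫⁻ x, ENNReal.ofReal (v x ^ 2) with hM
  set g : ℝ → ℝ≥0∞ := fun z => ∫⁻ x, ENNReal.ofReal ((v (x + z) - v x) ^ 2) with hg
  have hNlen : len ≤ (N : ℝ) * (σ / 2) := by
    have h1 : 2 * len / σ ≤ (N : ℝ) := Nat.le_ceil _
    have h2 : (2 * len / σ) * (σ / 2) ≤ (N : ℝ) * (σ / 2) := by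
      apply mul_le_mul_of_nonneg_right h1; positivity
    calc len = (2 * len / σ) * (σ / 2) := by field_simp
      _ ≤ _ := h2
  have step1 : ∀ z ∈ Set.Ioc (σ / 2) σ, M ≤ (N : ℝ≥0∞) ^ 2 * g z := by
    intro z hz
    have hz0 : 0 < z := lt_trans (by positivity) hz.1
    -- pointwise chain inequality
    have chain : ∀ x : ℝ, v x ^ 2 ≤
        (N : ℝ) * ∑ k ∈ Finset.range N, (v (x + ((k : ℝ) + 1) * z) - v (x + (k : ℝ) * z)) ^ 2 := by
      intro x
      by_cases hx : x ∈ Set.Ioo 0 len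
      · have hend : v (x + (N : ℝ) * z) = 0 := by
          apply hv0
          intro hmem
          have h1 : (N : ℝ) * (σ / 2) ≤ (N : ℝ) * z :=
            mul_le_mul_of_nonneg_left hz.1.le (by positivity)
          have := hmem.2
          have hx0 := hx.1
          linarith
        have tele : ∑ k ∈ Finset.range N, (v (x + ((k : ℝ) + 1) * z) - v (x + (k : ℝ) * z))
            = v (x + (N : ℝ) * z) - v x := by
          have h := Finset.sum_range_sub (f := fun k : ℕ => v (x + (k : ℝ) * z)) N
          have heq : ∀ k ∈ Finset.range N,
              (v (x + ((k : ℝ) + 1) * z) - v (x + (k : ℝ) * z))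
                = (fun k : ℕ => v (x + (k : ℝ) * z)) (k + 1)
                  - (fun k : ℕ => v (x + (k : ℝ) * z)) k := by
            intro k _
            simp only [Nat.cast_add, Nat.cast_one]
          rw [Finset.sum_congr rfl heq, h]
          norm_num
        have sq_eq : v x ^ 2
            = (∑ k ∈ Finset.range N, (v (x + ((k : ℝ) + 1) * z) - v (x + (k : ℝ) * z))) ^ 2 := by
          rw [tele, hend]; ring
        rw [sq_eq]
        have := sq_sum_le_card_mul_sum_sq
          (s := Finset.range N)
          (f := fun k : ℕ => v (x + ((k : ℝ) + 1) * z) - v (x + (k : ℝ) * z))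
        simpa [Finset.card_range] using this
      · have h0 : v x = 0 := hv0 x hx
        rw [h0]
        have : (0:ℝ) ≤ ∑ k ∈ Finset.range N,
            (v (x + ((k : ℝ) + 1) * z) - v (x + (k : ℝ) * z)) ^ 2 :=
          Finset.sum_nonneg fun k _ => sq_nonneg _
        simpa using mul_nonneg (Nat.cast_nonneg N) this
    have hterm : ∀ k : ℕ,
        (∫⁻ x, ENNReal.ofReal ((v (x + ((k : ℝ) + 1) * z) - v (x + (k : ℝ) * z)) ^ 2)) = g z := by
      intro k
      have h1 : (∫⁻ x, ENNReal.ofReal ((v (x + ((k : ℝ) + 1) * z) - v (x + (k : ℝ) * z)) ^ 2))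
          = ∫⁻ x, ENNReal.ofReal ((v ((x + (k : ℝ) * z) + z) - v (x + (k : ℝ) * z)) ^ 2) := by
        apply lintegral_congr
        intro x
        rw [show x + ((k : ℝ) + 1) * z = (x + (k : ℝ) * z) + z by ring]
      rw [h1]
      exact lintegral_add_right_eq_self
        (fun x => ENNReal.ofReal ((v (x + z) - v x) ^ 2)) ((k : ℝ) * z)
    calc M ≤ ∫⁻ x, ENNReal.ofReal ((N : ℝ) * ∑ k ∈ Finset.range N,
            (v (x + ((k : ℝ) + 1) * z) - v (x + (k : ℝ) * z)) ^ 2) :=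
          lintegral_mono fun x => ENNReal.ofReal_le_ofReal (chain x)
      _ = ∫⁻ x, (N : ℝ≥0∞) * ∑ k ∈ Finset.range N,
            ENNReal.ofReal ((v (x + ((k : ℝ) + 1) * z) - v (x + (k : ℝ) * z)) ^ 2) := by
          apply lintegral_congr
          intro x
          rw [ENNReal.ofReal_mul (by positivity), ENNReal.ofReal_natCast,
            ENNReal.ofReal_sum_of_nonneg (fun k _ => sq_nonneg _)]
      _ = (N : ℝ≥0∞) * ∫⁻ x, ∑ k ∈ Finset.range N,
            ENNReal.ofReal ((v (x + ((k : ℝ) + 1) * z) - v (x + (k : ℝ) * z)) ^ 2) :=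
          lintegral_const_mul' _ _ (ENNReal.natCast_ne_top N)
      _ = (N : ℝ≥0∞) * ∑ k ∈ Finset.range N,
            ∫⁻ x, ENNReal.ofReal ((v (x + ((k : ℝ) + 1) * z) - v (x + (k : ℝ) * z)) ^ 2) := by
          congr 1
          exact lintegral_finset_sum _ fun k _ =>
            ENNReal.measurable_ofReal.comp
              (((hv.comp (measurable_id.add_const _)).sub
                (hv.comp (measurable_id.add_const _))).pow_const 2)
      _ = (N : ℝ≥0∞) * ∑ _k ∈ Finset.range N, g z := by
          congr 1
          exact Finset.sum_congr rfl fun k _ => hterm k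
      _ = (N : ℝ≥0∞) ^ 2 * g z := by
          rw [Finset.sum_const, Finset.card_range, nsmul_eq_mul, sq]
          ring
  -- Step 2: integrate over z
  calc ENNReal.ofReal (σ / 2) * M = ∫⁻ _z in Set.Ioc (σ / 2) σ, M := by
        rw [setLIntegral_const, Real.volume_Ioc, show σ - σ / 2 = σ / 2 by ring, mul_comm]
    _ ≤ ∫⁻ z in Set.Ioc (σ / 2) σ, (N : ℝ≥0∞) ^ 2 * g z :=
        lintegral_mono_ae ((ae_restrict_iff' measurableSet_Ioc).2
          (Filter.Eventually.of_forall step1))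
    _ ≤ ∫⁻ z in Set.Ioc 0 σ, (N : ℝ≥0∞) ^ 2 * g z :=
        lintegral_mono_set (Set.Ioc_subset_Ioc_left (by positivity))
    _ = (N : ℝ≥0∞) ^ 2 * ∫⁻ z in Set.Ioc 0 σ, g z :=
        lintegral_const_mul' _ _ (by simp)

/-- Nonlocal Poincaré inequality for the homogeneous volume constraint in 1D:
if the kernel `ρ ≥ 0` is bounded below by `ρ₀ > 0` on `[0,σ]` with
`0 < σ ≤ δ`, then there exists `κ > 0`, depending only on `ρ₀`, `σ`, and the
length of `Ω`, such that every `u ∈ L²` vanishing on the interaction collar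
`Ω_I = Ω̂ \ Ω` satisfies
`‖u‖²_{L²(Ω)} ≤ κ ∫∫ ρ(|y-x|)(u(y)-u(x))² dy dx`. -/
theorem nonlocal_poincare
    (len σ ρ₀ : ℝ) (hlen : 0 < len) (hσ : 0 < σ) (hρ₀ : 0 < ρ₀)
    (ρ : ℝ → ℝ) (hρmeas : Measurable ρ) (hρ0 : ∀ r, 0 ≤ ρ r)
    (hρlow : ∀ z : ℝ, |z| ≤ σ → ρ₀ ≤ ρ |z|) :
    ∃ κ : ℝ, 0 < κ ∧
      ∀ δ : ℝ, σ ≤ δ →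
        ∀ u : ℝ → ℝ,
          MemLp u 2 (volume.restrict (Set.Icc (-δ) (len + δ))) →
          (∀ x ∈ Set.Icc (-δ) (len + δ) \ Set.Ioo 0 len, u x = 0) →
          (∫⁻ x in Set.Ioo 0 len, ENNReal.ofReal ((u x) ^ 2))
            ≤ ENNReal.ofReal κ *
              ∫⁻ x in Set.Icc (-δ) (len + δ),
                ∫⁻ y in Set.Icc (-δ) (len + δ),
                  ENNReal.ofReal (ρ |y - x| * (u y - u x) ^ 2) := by
  set N := ⌈2 * len / σ⌉₊ with hNdef
  have hN1 : 1 ≤ N := Nat.one_le_iff_ne_zero.2 (Nat.ceil_pos.2 (by positivity : (0:ℝ) < 2 * len / σ)).ne'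
  refine ⟨2 * (N : ℝ) ^ 2 / (σ * ρ₀), by positivity, ?_⟩
  intro δ hδ u hu hu0
  have hδ0 : 0 < δ := lt_of_lt_of_le hσ hδ
  set Q := Set.Icc (-δ) (len + δ) with hQdef
  have hQm : MeasurableSet Q := measurableSet_Icc
  have hIoo : MeasurableSet (Set.Ioo (0:ℝ) len) := measurableSet_Ioo
  have hsub : Set.Ioo (0:ℝ) len ⊆ Q := by
    intro x hx
    exact ⟨by linarith [hx.1], by linarith [hx.2]⟩
  -- a measurable representative vanishing off (0, len)
  have huae : AEMeasurable u (volume.restrict (Set.Ioo 0 len)) :=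
    hu.aestronglyMeasurable.aemeasurable.mono_measure (Measure.restrict_mono hsub le_rfl)
  set w : ℝ → ℝ := (Set.Ioo 0 len).indicator u with hwdef
  have hwae : AEMeasurable w volume := (aemeasurable_indicator_iff hIoo).2 huae
  set v : ℝ → ℝ := (Set.Ioo 0 len).indicator hwae.mk with hvdef
  have hvm : Measurable v := hwae.measurable_mk.indicator hIoo
  have hwv : w =ᵐ[volume] v := by
    have h1 : w = (Set.Ioo 0 len).indicator w := by
      rw [hwdef, Set.indicator_indicator, Set.inter_self]
    nth_rewrite 1 [h1]
    filter_upwards [hwae.ae_eq_mk] with x hx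
    by_cases h : x ∈ Set.Ioo (0:ℝ) len
    · rw [Set.indicator_of_mem h, hx, hvdef, Set.indicator_of_mem h]
    · rw [Set.indicator_of_notMem h, hvdef, Set.indicator_of_notMem h]
  have hv0 : ∀ x, x ∉ Set.Ioo (0:ℝ) len → v x = 0 := fun x hx =>
    Set.indicator_of_notMem hx _
  have huw : ∀ x ∈ Q, u x = w x := by
    intro x hx
    by_cases h : x ∈ Set.Ioo (0:ℝ) len
    · rw [hwdef, Set.indicator_of_mem h]
    · rw [hu0 x ⟨hx, h⟩, hwdef, Set.indicator_of_notMem h]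
  have huv : ∀ᵐ x ∂(volume.restrict Q), u x = v x := by
    filter_upwards [(ae_restrict_iff' hQm).2 (Filter.Eventually.of_forall huw),
      ae_restrict_of_ae hwv] with x h h' using h.trans h'
  set M := ∫⁻ x, ENNReal.ofReal (v x ^ 2) with hM
  -- LHS rewrite
  have hLHS : (∫⁻ x in Set.Ioo 0 len, ENNReal.ofReal ((u x) ^ 2)) = M := by
    have e1 : (∫⁻ x in Set.Ioo 0 len, ENNReal.ofReal ((u x) ^ 2))
        = ∫⁻ x in Set.Ioo 0 len, ENNReal.ofReal (v x ^ 2) := by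
      apply lintegral_congr_ae
      have h2 : ∀ᵐ x ∂(volume.restrict (Set.Ioo 0 len)), u x = w x :=
        (ae_restrict_iff' hIoo).2 (Filter.Eventually.of_forall fun x hx => huw x (hsub hx))
      filter_upwards [h2, ae_restrict_of_ae hwv] with x h h' using by rw [h, h']
    rw [e1]
    exact lintegral_eq_setLIntegral hIoo _ (fun x hx => by rw [hv0 x hx]; simp)
  set R := ∫⁻ x in Q, ∫⁻ y in Q, ENNReal.ofReal (ρ |y - x| * (u y - u x) ^ 2) with hRdef
  have hRv : R = ∫⁻ x in Q, ∫⁻ y in Q, ENNReal.ofReal (ρ |y - x| * (v y - v x) ^ 2) := by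
    apply lintegral_congr_ae
    filter_upwards [huv] with x hx
    apply lintegral_congr_ae
    filter_upwards [huv] with y hy
    rw [hx, hy]
  set T := ∫⁻ z in Set.Ioc 0 σ, ∫⁻ x, ENNReal.ofReal ((v (x + z) - v x) ^ 2) with hT
  set X : ℝ → ℝ≥0∞ :=
    fun x => ∫⁻ y in Set.Ioc x (x + σ), ENNReal.ofReal (ρ₀ * (v y - v x) ^ 2) with hX
  have key1 : ∀ x ∈ Q,
      X x ≤ ∫⁻ y in Q, ENNReal.ofReal (ρ |y - x| * (v y - v x) ^ 2) := by
    intro x hx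
    have hsplitset : Set.Ioc x (x + σ) ∩ Q ∪ Set.Ioc x (x + σ) \ Q = Set.Ioc x (x + σ) :=
      Set.inter_union_diff _ _
    have hsplit : X x = (∫⁻ y in Set.Ioc x (x + σ) ∩ Q, ENNReal.ofReal (ρ₀ * (v y - v x) ^ 2))
        + ∫⁻ y in Set.Ioc x (x + σ) \ Q, ENNReal.ofReal (ρ₀ * (v y - v x) ^ 2) := by
      have h := lintegral_union (μ := volume)
        (f := fun y => ENNReal.ofReal (ρ₀ * (v y - v x) ^ 2))
        (A := Set.Ioc x (x + σ) ∩ Q) (B := Set.Ioc x (x + σ) \ Q)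
        (measurableSet_Ioc.diff hQm)
        (Set.disjoint_sdiff_right.mono_left Set.inter_subset_right)
      rw [hsplitset] at h
      exact h
    have hzero : (∫⁻ y in Set.Ioc x (x + σ) \ Q, ENNReal.ofReal (ρ₀ * (v y - v x) ^ 2)) = 0 := by
      apply setLIntegral_zero_of_zero (measurableSet_Ioc.diff hQm)
      intro y hy
      have hyI := hy.1
      have hyQ := hy.2
      have h1 : len + δ < y := by
        have hy' : y < -δ ∨ len + δ < y := by
          by_contra hcon
          push_neg at hcon
          exact hyQ ⟨hcon.1, hcon.2⟩
        rcases hy' with h | h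
        · exfalso; have := hyI.1; have := hx.1; linarith
        · exact h
      have hvy : v y = 0 := hv0 y (by
        intro hmem; have := hmem.2; linarith)
      have hvx : v x = 0 := hv0 x (by
        intro hmem
        have h2 : y - σ ≤ x := by linarith [hyI.2]
        have := hmem.2
        linarith)
      simp [hvy, hvx]
    rw [hsplit, hzero, add_zero]
    calc (∫⁻ y in Set.Ioc x (x + σ) ∩ Q, ENNReal.ofReal (ρ₀ * (v y - v x) ^ 2))
        ≤ ∫⁻ y in Set.Ioc x (x + σ) ∩ Q, ENNReal.ofReal (ρ |y - x| * (v y - v x) ^ 2) := by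
          apply lintegral_mono_ae
          apply (ae_restrict_iff' (measurableSet_Ioc.inter hQm)).2
          apply Filter.Eventually.of_forall
          intro y hy
          apply ENNReal.ofReal_le_ofReal
          apply mul_le_mul_of_nonneg_right _ (sq_nonneg _)
          have habs : |y - x| ≤ σ := by
            rw [abs_of_pos (sub_pos.2 hy.1.1)]
            linarith [hy.1.2]
          exact hρlow _ habs
      _ ≤ _ := lintegral_mono_set Set.inter_subset_right
  have key2 : ∀ x, x ∉ Q → X x = 0 := by
    intro x hx
    apply setLIntegral_zero_of_zero measurableSet_Ioc
    intro y hy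
    have hx' : x < -δ ∨ len + δ < x := by
      by_contra hcon
      push_neg at hcon
      exact hx ⟨hcon.1, hcon.2⟩
    rcases hx' with h | h
    · have hvx : v x = 0 := hv0 x (by intro hmem; have := hmem.1; linarith)
      have hvy : v y = 0 := hv0 y (by
        intro hmem
        have := hmem.1
        have := hy.2
        linarith)
      simp [hvx, hvy]
    · have hvx : v x = 0 := hv0 x (by intro hmem; have := hmem.2; linarith)
      have hvy : v y = 0 := hv0 y (by
        intro hmem
        have := hmem.2
        have := hy.1
        linarith)
      simp [hvx, hvy]
  have hXtrans : ∀ x : ℝ,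
      X x = ∫⁻ z in Set.Ioc 0 σ, ENNReal.ofReal (ρ₀ * (v (x + z) - v x) ^ 2) := by
    intro x
    have hg : MeasurePreserving (fun z : ℝ => x + z) volume volume :=
      measurePreserving_add_left volume x
    have hge : MeasurableEmbedding (fun z : ℝ => x + z) :=
      (MeasurableEquiv.addLeft x).measurableEmbedding
    have hpre : (fun z : ℝ => x + z) ⁻¹' Set.Ioc x (x + σ) = Set.Ioc 0 σ := by
      ext z
      simp only [Set.mem_preimage, Set.mem_Ioc]
      constructor <;> rintro ⟨h1, h2⟩ <;> constructor <;> linarith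
    have h := hg.setLIntegral_comp_preimage_emb hge
      (fun y => ENNReal.ofReal (ρ₀ * (v y - v x) ^ 2)) (Set.Ioc x (x + σ))
    rw [hpre] at h
    exact h.symm
  have hFm : Measurable (Function.uncurry
      fun x z : ℝ => ENNReal.ofReal (ρ₀ * (v (x + z) - v x) ^ 2)) := by
    apply ENNReal.measurable_ofReal.comp
    exact measurable_const.mul
      (((hvm.comp (measurable_fst.add measurable_snd)).sub (hvm.comp measurable_fst)).pow_const 2)
  have hRT : ENNReal.ofReal ρ₀ * T ≤ R := by
    rw [hRv]
    have e : ∀ z : ℝ, ENNReal.ofReal ρ₀ * ∫⁻ x, ENNReal.ofReal ((v (x + z) - v x) ^ 2)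
        = ∫⁻ x, ENNReal.ofReal (ρ₀ * (v (x + z) - v x) ^ 2) := by
      intro z
      rw [← lintegral_const_mul' _ _ ENNReal.ofReal_ne_top]
      apply lintegral_congr
      intro x
      rw [← ENNReal.ofReal_mul hρ₀.le]
    calc ENNReal.ofReal ρ₀ * T
        = ∫⁻ z in Set.Ioc 0 σ, ∫⁻ x, ENNReal.ofReal (ρ₀ * (v (x + z) - v x) ^ 2) := by
          rw [hT, ← lintegral_const_mul' _ _ ENNReal.ofReal_ne_top]
          exact lintegral_congr fun z => e z
      _ = ∫⁻ x : ℝ, ∫⁻ z in Set.Ioc 0 σ, ENNReal.ofReal (ρ₀ * (v (x + z) - v x) ^ 2) :=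
          (lintegral_lintegral_swap hFm.aemeasurable).symm
      _ = ∫⁻ x : ℝ, X x := lintegral_congr fun x => (hXtrans x).symm
      _ = ∫⁻ x in Q, X x := (lintegral_eq_setLIntegral hQm X key2).symm
      _ ≤ ∫⁻ x in Q, ∫⁻ y in Q, ENNReal.ofReal (ρ |y - x| * (v y - v x) ^ 2) :=
          lintegral_mono_ae ((ae_restrict_iff' hQm).2 (Filter.Eventually.of_forall key1))
  have hcore := chain_core len σ hlen hσ v hvm hv0
  rw [← hNdef, ← hM, ← hT] at hcore
  -- final algebra in ℝ≥0∞
  set c : ℝ≥0∞ := ENNReal.ofReal (ρ₀ * (σ / 2)) with hc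
  have hc0 : c ≠ 0 := by
    rw [hc, Ne, ENNReal.ofReal_eq_zero, not_le]
    positivity
  have hctop : c ≠ ⊤ := ENNReal.ofReal_ne_top
  have h1 : M * c ≤ (N : ℝ≥0∞) ^ 2 * R := by
    calc M * c = ENNReal.ofReal ρ₀ * (ENNReal.ofReal (σ / 2) * M) := by
          rw [hc, ENNReal.ofReal_mul hρ₀.le]; ring
      _ ≤ ENNReal.ofReal ρ₀ * ((N : ℝ≥0∞) ^ 2 * T) := mul_le_mul_right hcore _
      _ = (N : ℝ≥0∞) ^ 2 * (ENNReal.ofReal ρ₀ * T) := by ring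
      _ ≤ (N : ℝ≥0∞) ^ 2 * R := mul_le_mul_right hRT _
  have h2 : M ≤ (N : ℝ≥0∞) ^ 2 * R / c :=
    (ENNReal.le_div_iff_mul_le (Or.inl hc0) (Or.inl hctop)).2 h1
  have h3 : (N : ℝ≥0∞) ^ 2 * R / c = ENNReal.ofReal (2 * (N : ℝ) ^ 2 / (σ * ρ₀)) * R := by
    have hN2 : (N : ℝ≥0∞) ^ 2 = ENNReal.ofReal ((N : ℝ) ^ 2) := by
      rw [ENNReal.ofReal_pow (Nat.cast_nonneg N), ENNReal.ofReal_natCast]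
    have hdiv : ENNReal.ofReal ((N : ℝ) ^ 2) / c
        = ENNReal.ofReal (2 * (N : ℝ) ^ 2 / (σ * ρ₀)) := by
      rw [hc, ← ENNReal.ofReal_div_of_pos (by positivity)]
      congr 1
      field_simp
    rw [div_eq_mul_inv, mul_right_comm, ← div_eq_mul_inv, hN2, hdiv]
  rw [hLHS]
  calc M ≤ (N : ℝ≥0∞) ^ 2 * R / c := h2
    _ = ENNReal.ofReal (2 * (N : ℝ) ^ 2 / (σ * ρ₀)) * R := h3
end
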